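/- Let A = E(1) ⊗ E(n-1)^{r-1} with generators e₀ (from E(1)) and e₁,…,e_{n-1} (from the truncated exterior algebra, truncated above degree r-1), where n > r > 1. Set ē_i = 1⊗e_i − e_i⊗1 in A ⊗ A (with the sign-twisted multiplication). Let k = min{n-1, 2r-2} and let J ⊆ {1,…,n-1} with |J| = k. Then the product ē₀ ∏_{i∈J} ē_i is nonzero in A ⊗ A. -/

import Mathlib

open ExteriorAlgebra

/-! Let `A = E(1) ⊗ E(n-1)^{r-1}` be the Koszul-signed graded tensor product of the exterior
algebra on one degree-one generator `e₀` with the exterior algebra on `n-1` degree-one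
generators `e₁, …, e_{n-1}` truncated above degree `r-1`.  Since the Koszul tensor product of
exterior algebras is the exterior algebra on the direct sum of the generating spaces, both `A`
and its Koszul tensor square `A ⊗ A` have canonical presentations as quotients of exterior
algebras: `A ⊗ A` is the exterior algebra on two copies (indexed by `b : Fin 2`, where `b = 0`
is the left tensor factor and `b = 1` the right one) of the generators `e₀, …, e_{n-1}`,
modulo the two-sided ideal generated by the degree-`r` monomials in `e₁, …, e_{n-1}` of each
copy.  Under this identification `x ⊗ y` corresponds to `x⁽⁰⁾ · y⁽¹⁾`. -/

/-- The exterior algebra on two copies of the `n` generators. -/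
abbrev ExtAlg2 (n : ℕ) : Type := ExteriorAlgebra ℂ (Fin 2 × Fin n → ℂ)

/-- The generator `e_i` of the copy `b` (`b = 0`: left factor `e_i ⊗ 1`;
`b = 1`: right factor `1 ⊗ e_i`). -/
noncomputable def bgen (n : ℕ) (b : Fin 2) (i : Fin n) : ExtAlg2 n :=
  ι ℂ (Pi.single (b, i) 1)

/-- The monomial `e_S` in the generators of the copy `b`, in increasing order. -/
noncomputable def bProd (n : ℕ) (b : Fin 2) (S : Finset (Fin n)) : ExtAlg2 n :=
  ((S.sort (· ≤ ·)).map (bgen n b)).prod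

/-- The relation killing the degree-`r` monomials in `e₁, …, e_{n-1}` of each copy:
the truncation of each tensor factor of `A ⊗ A` above degree `r-1`. -/
def A2Rel (n r : ℕ) : ExtAlg2 n → ExtAlg2 n → Prop :=
  fun x y => y = 0 ∧ ∃ (b : Fin 2) (S : Finset (Fin n)),
    (∀ i ∈ S, (i : ℕ) ≠ 0) ∧ S.card = r ∧ x = bProd n b S

/-- `A ⊗ A` with the sign-twisted multiplication, in its canonical presentation. -/
abbrev A2 (n r : ℕ) : Type := RingQuot (A2Rel n r)

/-- The quotient map onto `A ⊗ A`. -/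
noncomputable def a2mk (n r : ℕ) : ExtAlg2 n →ₐ[ℂ] A2 n r :=
  RingQuot.mkAlgHom ℂ (A2Rel n r)

/-- `ē_i = 1⊗e_i − e_i⊗1` in `A ⊗ A`. -/
noncomputable def ebar (n r : ℕ) (i : Fin n) : A2 n r :=
  a2mk n r (bgen n 1 i) - a2mk n r (bgen n 0 i)

/- auxiliary machinery -/

def keepP (n : ℕ) (J T : Finset (Fin n)) (p : Fin 2 × Fin n) : Prop :=
  (p.1 = 1 ∧ (p.2 : ℕ) = 0) ∨ (p.1 = 0 ∧ p.2 ∈ T) ∨ (p.1 = 1 ∧ p.2 ∈ J ∧ p.2 ∉ T)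

instance (n : ℕ) (J T : Finset (Fin n)) (p : Fin 2 × Fin n) : Decidable (keepP n J T p) := by
  unfold keepP; infer_instance

noncomputable def Lmap (n : ℕ) (J T : Finset (Fin n)) :
    (Fin 2 × Fin n → ℂ) →ₗ[ℂ] (Fin 2 × Fin n → ℂ) :=
  LinearMap.pi fun p => if keepP n J T p then LinearMap.proj p else 0

lemma Lmap_single (n : ℕ) (J T : Finset (Fin n)) (q : Fin 2 × Fin n) :
    Lmap n J T (Pi.single q 1) = if keepP n J T q then Pi.single q 1 else 0 := by
  funext p
  simp only [Lmap, LinearMap.pi_apply]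
  by_cases hpq : p = q
  · subst hpq; split_ifs <;> simp
  · split_ifs <;> simp [Pi.single_eq_of_ne hpq]

lemma phi_bgen (n : ℕ) (J T : Finset (Fin n)) (b : Fin 2) (i : Fin n) :
    ExteriorAlgebra.map (Lmap n J T) (bgen n b i) =
      if keepP n J T (b, i) then bgen n b i else 0 := by
  rw [bgen, ExteriorAlgebra.map_apply_ι, Lmap_single]
  split_ifs <;> simp [bgen]

lemma phi_kills (n r : ℕ) (J T : Finset (Fin n))
    (hT : T.card < r) (hJT : (J \ T).card < r) :
    ∀ ⦃x y : ExtAlg2 n⦄, A2Rel n r x y →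
      ExteriorAlgebra.map (Lmap n J T) x = ExteriorAlgebra.map (Lmap n J T) y := by
  rintro x y ⟨rfl, b, S, hS0, hScard, rfl⟩
  rw [map_zero]
  have hbad : ∃ i ∈ S, ¬ keepP n J T (b, i) := by
    by_contra h
    push_neg at h
    fin_cases b
    · have hsub : S ⊆ T := by
        intro i hi
        have hk := h i hi
        simp only [keepP, Fin.ext_iff] at hk
        have := hS0 i hi
        simp_all
      have := Finset.card_le_card hsub
      omega
    · have hsub : S ⊆ J \ T := by
        intro i hi
        have hk := h i hi
        simp only [keepP, Fin.ext_iff] at hk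
        have := hS0 i hi
        rw [Finset.mem_sdiff]
        simp_all
      have := Finset.card_le_card hsub
      omega
  obtain ⟨i, hiS, hki⟩ := hbad
  rw [bProd, map_list_prod, List.map_map]
  apply List.prod_eq_zero
  refine List.mem_map.mpr ⟨i, (Finset.mem_sort _).mpr hiS, ?_⟩
  show ExteriorAlgebra.map (Lmap n J T) (bgen n b i) = 0
  rw [phi_bgen, if_neg hki]

lemma list_prod_smul {α : Type*} {A : Type*} [Ring A] [Algebra ℂ A]
    (l : List α) (c : α → ℂ) (f : α → A) :
    (l.map fun i => c i • f i).prod = (l.map c).prod • (l.map f).prod := by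
  induction l with
  | nil => simp
  | cons a l ih => simp [ih, smul_mul_smul_comm, smul_smul, mul_comm]

lemma iotaMulti_single_ne_zero (n m : ℕ) (p : Fin m → Fin 2 × Fin n)
    (hinj : Function.Injective p) :
    ιMulti ℂ m (fun j => (Pi.single (p j) 1 : Fin 2 × Fin n → ℂ)) ≠ 0 := by
  classical
  set P : (Fin 2 × Fin n → ℂ) →ₗ[ℂ] (Fin m → ℂ) := LinearMap.pi fun j => LinearMap.proj (p j)
  set D : (Fin 2 × Fin n → ℂ) [⋀^Fin m]→ₗ[ℂ] ℂ :=
    ((Pi.basisFun ℂ (Fin m)).det).compLinearMap P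
  set F : ∀ i : ℕ, (Fin 2 × Fin n → ℂ) [⋀^Fin i]→ₗ[ℂ] ℂ :=
    Function.update (fun i => 0) m D
  intro h
  have h2 := congrArg (liftAlternating F) h
  rw [liftAlternating_apply_ιMulti, map_zero] at h2
  have hF : F m = D := Function.update_self _ _ _
  rw [hF, AlternatingMap.compLinearMap_apply, Module.Basis.det_apply] at h2
  have hmat : (Pi.basisFun ℂ (Fin m)).toMatrix
      (fun i => P (Pi.single (p i) 1)) = 1 := by
    ext i j
    rw [Module.Basis.toMatrix_apply, Pi.basisFun_repr]
    simp only [P, LinearMap.pi_apply, LinearMap.proj_apply]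
    rw [Pi.single_apply, Matrix.one_apply]
    simp [hinj.eq_iff]
  rw [hmat, Matrix.det_one] at h2
  exact one_ne_zero h2

lemma keep_one_zero (n : ℕ) (J T : Finset (Fin n)) (i : Fin n) (hiz : (i : ℕ) = 0) :
    keepP n J T (1, i) := Or.inl ⟨rfl, hiz⟩

lemma keep0_iff (n : ℕ) (J T : Finset (Fin n)) (i : Fin n) :
    keepP n J T (0, i) ↔ i ∈ T := by
  constructor
  · rintro (⟨h, -⟩ | ⟨-, h⟩ | ⟨h, -⟩)
    · exact absurd h (by simp)
    · exact h
    · exact absurd h (by simp)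
  · exact fun h => Or.inr (Or.inl ⟨rfl, h⟩)

lemma keep1_iff (n : ℕ) (J T : Finset (Fin n)) (i : Fin n) (hi : i ∈ J) (hiz : (i : ℕ) ≠ 0) :
    keepP n J T (1, i) ↔ i ∉ T := by
  constructor
  · rintro (⟨-, h⟩ | ⟨h, -⟩ | ⟨-, -, h⟩)
    · exact absurd h hiz
    · exact absurd h (by simp)
    · exact h
  · exact fun h => Or.inr (Or.inr ⟨rfl, hi, h⟩)

/-- let `k = min{n-1, 2r-2}` and `J ⊆ {1,…,n-1}` with `|J| = k` (`n > r > 1`).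
Then `ē₀ ∏_{i∈J} ē_i ≠ 0` in `A ⊗ A`. -/
theorem ebar_prod_ne_zero (n r : ℕ) (hr : 1 < r) (hrn : r < n)
    (J : Finset (Fin n)) (hJ0 : ∀ i ∈ J, (i : ℕ) ≠ 0)
    (hJcard : J.card = min (n - 1) (2 * r - 2)) :
    ebar n r ⟨0, by omega⟩ * ((J.sort (· ≤ ·)).map (ebar n r)).prod ≠ 0 := by
  classical
  intro hzero
  have hn0 : 0 < n := by omega
  set i0 : Fin n := ⟨0, hn0⟩ with hi0def
  have hkle : J.card ≤ 2 * r - 2 := by omega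
  obtain ⟨T, hTJ, hTcard⟩ := Finset.exists_subset_card_eq
    (show J.card - min J.card (r - 1) ≤ J.card from Nat.sub_le _ _)
  have hTc : T.card < r := by omega
  have hJTc : (J \ T).card < r := by rw [Finset.card_sdiff_of_subset hTJ]; omega
  set Φ : ExtAlg2 n →ₐ[ℂ] ExtAlg2 n := ExteriorAlgebra.map (Lmap n J T) with hΦ
  set Φ' : A2 n r →ₐ[ℂ] ExtAlg2 n :=
    RingQuot.liftAlgHom ℂ ⟨Φ, phi_kills n r J T hTc hJTc⟩ with hΦ'
  have hmk : ∀ x, Φ' (a2mk n r x) = Φ x := fun x =>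
    RingQuot.liftAlgHom_mkAlgHom_apply ℂ Φ _ x
  have hval : ∀ i ∈ J, (⇑Φ' ∘ ebar n r) i =
      (if i ∈ T then (-1 : ℂ) else 1) • bgen n (if i ∈ T then 0 else 1) i := by
    intro i hi
    have hiz := hJ0 i hi
    show Φ' (ebar n r i) = _
    rw [ebar, map_sub, hmk, hmk, hΦ, phi_bgen, phi_bgen]
    by_cases hiT : i ∈ T
    · rw [if_neg (fun h => ((keep1_iff n J T i hi hiz).mp h) hiT),
        if_pos ((keep0_iff n J T i).mpr hiT), if_pos hiT, if_pos hiT]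
      simp
    · rw [if_pos ((keep1_iff n J T i hi hiz).mpr hiT),
        if_neg (fun h => hiT ((keep0_iff n J T i).mp h)), if_neg hiT, if_neg hiT]
      simp
  have hi0T : i0 ∉ T := fun h => hJ0 _ (hTJ h) rfl
  have hvali0 : Φ' (ebar n r i0) = bgen n 1 i0 := by
    rw [ebar, map_sub, hmk, hmk, hΦ, phi_bgen, phi_bgen]
    rw [if_pos (keep_one_zero n J T i0 rfl),
      if_neg (fun h => hi0T ((keep0_iff n J T i0).mp h))]
    simp
  have h0 : Φ' (ebar n r i0 * ((J.sort (· ≤ ·)).map (ebar n r)).prod) = 0 := by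
    rw [show ebar n r i0 * ((J.sort (· ≤ ·)).map (ebar n r)).prod = 0 from hzero, map_zero]
  rw [map_mul, map_list_prod, List.map_map, hvali0, List.map_congr_left (fun i hi => hval i ((Finset.mem_sort _).mp hi)),
    list_prod_smul, mul_smul_comm] at h0
  have hcne : (((J.sort (· ≤ ·)).map fun i => if i ∈ T then (-1 : ℂ) else 1)).prod ≠ 0 := by
    intro hc
    obtain ⟨i, hi, hi0⟩ := List.mem_map.mp (List.prod_eq_zero_iff.mp hc)
    revert hi0; split_ifs <;> norm_num
  have hprod0 : bgen n 1 i0 *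
      ((J.sort (· ≤ ·)).map fun i => bgen n (if i ∈ T then 0 else 1) i).prod = 0 := by
    rcases smul_eq_zero.mp h0 with h | h
    · exact absurd h hcne
    · exact h
  set l := J.sort (· ≤ ·) with hl
  set p : Fin (l.length + 1) → Fin 2 × Fin n :=
    Fin.cons (1, i0) (fun j => (if l.get j ∈ T then 0 else 1, l.get j)) with hp
  have hmem : ∀ j : Fin l.length, l.get j ∈ J := fun j => (Finset.mem_sort _).mp (l.get_mem j)
  have hinj : Function.Injective p := by
    rw [hp, Fin.cons_injective_iff]
    constructor
    · rintro ⟨j, hj⟩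
      have h2 : l.get j = i0 := congrArg Prod.snd hj
      exact hJ0 _ (hmem j) (congrArg Fin.val h2)
    · intro a b hab
      have h2 : l.get a = l.get b := congrArg Prod.snd hab
      exact List.nodup_iff_injective_get.mp (Finset.sort_nodup J _) h2
  have hident : bgen n 1 i0 *
      (l.map fun i => bgen n (if i ∈ T then 0 else 1) i).prod =
      ιMulti ℂ (l.length + 1) (fun j => (Pi.single (p j) 1 : Fin 2 × Fin n → ℂ)) := by
    rw [ιMulti_apply, List.ofFn_succ, List.prod_cons]
    congr 1
    conv_lhs => rw [← List.ofFn_get l, List.map_ofFn]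
    refine congrArg List.prod (congrArg List.ofFn (funext fun j => ?_))
    simp only [Function.comp_apply, hp, Fin.cons_succ, bgen]
  rw [hident] at hprod0
  exact iotaMulti_single_ne_zero n (l.length + 1) p hinj hprod0
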